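/- Let π be a probability measure on (Ω,𝒮₁), r ∈ ℕ, 0 ≤ z ≤ r, and let X = (Δ₁,…,Δ_r), Y = (Λ₁,…,Λ_r) ∈ ℱ_{(pref(ℝ^r),π)} with Δ_j, Λ_j π-integrable for all j. If (X,Y) ∈ R_{(pref(ℝ^r),π)}, then for every ordinal dimension j ∈ {z+1,…,r}, the component Δ_j first-order stochastically dominates Λ_j, i.e., E_π(u∘Δ_j) ≥ E_π(u∘Λ_j) for every bounded nondecreasing measurable function u : ℝ → ℝ. -/

import Mathlib

open MeasureTheory
open scoped BigOperators

namespace GSD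

/-- The strict part `P_R` of a binary relation `R`. -/
def strictPart {α : Type*} (R : α → α → Prop) (a b : α) : Prop := R a b ∧ ¬ R b a

/-- The indifference part `I_R` of a binary relation `R`. -/
def indiffPart {α : Type*} (R : α → α → Prop) (a b : α) : Prop := R a b ∧ R b a

/-- `[A, R1, R2]` is a preference system: `R1` is a preorder on `A` and `R2` is a preorder
on `R1` (i.e. a reflexive-transitive relation supported on pairs belonging to `R1`). -/
structure IsPrefSystem {A : Type*} (R1 : A → A → Prop) (R2 : A × A → A × A → Prop) : Prop where
  refl1 : ∀ a, R1 a a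
  trans1 : ∀ a b c, R1 a b → R1 b c → R1 a c
  sub2 : ∀ p q, R2 p q → R1 p.1 p.2 ∧ R1 q.1 q.2
  refl2 : ∀ p, R1 p.1 p.2 → R2 p p
  trans2 : ∀ p q r, R2 p q → R2 q r → R2 p r

/-- `u` is a representation of the preference system `[A, R1, R2]`. -/
def IsRepresentation {A : Type*} (R1 : A → A → Prop) (R2 : A × A → A × A → Prop)
    (u : A → ℝ) : Prop :=
  (∀ a b, R1 a b → (u b ≤ u a ∧ (u a = u b ↔ R1 b a))) ∧
  (∀ a b c d, R2 (a, b) (c, d) →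
    (u c - u d ≤ u a - u b ∧ (u a - u b = u c - u d ↔ R2 (c, d) (a, b))))

/-- A preference system is consistent if it admits a representation. -/
def Consistent {A : Type*} (R1 : A → A → Prop) (R2 : A × A → A × A → Prop) : Prop :=
  ∃ u, IsRepresentation R1 R2 u

/-- The preference system is bounded with minimal element `a0` and maximal element `a1`. -/
def Bounded {A : Type*} (R1 : A → A → Prop) (a0 a1 : A) : Prop :=
  (∀ a, R1 a1 a) ∧ (∀ a, R1 a a0) ∧ strictPart R1 a1 a0

/-- Membership in the normalized representation set `𝒩_𝒜`. -/
def NormRep {A : Type*} (R1 : A → A → Prop) (R2 : A × A → A × A → Prop) (a0 a1 : A)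
    (u : A → ℝ) : Prop :=
  IsRepresentation R1 R2 u ∧ u a0 = 0 ∧ u a1 = 1

/-- Membership in `𝒩^δ_𝒜`: normalized representations separating strict pairs by at least `δ`. -/
def NormRepDelta {A : Type*} (R1 : A → A → Prop) (R2 : A × A → A × A → Prop) (a0 a1 : A)
    (δ : ℝ) (u : A → ℝ) : Prop :=
  NormRep R1 R2 a0 a1 u ∧
  (∀ a b, strictPart R1 a b → δ ≤ u a - u b) ∧
  (∀ c d e f, strictPart R2 (c, d) (e, f) → δ ≤ u c - u d - u e + u f)

/-- Membership in `ℱ_{(𝒜,π)}`: all representation-composites are integrable. -/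
def memF {Ω A : Type*} [MeasurableSpace Ω] (π : Measure Ω)
    (R1 : A → A → Prop) (R2 : A × A → A × A → Prop) (X : Ω → A) : Prop :=
  ∀ u, IsRepresentation R1 R2 u → Integrable (fun ω => u (X ω)) π

/-- The generalized stochastic dominance (GSD) relation `R_{(𝒜,π)}`. -/
def GSDrel {Ω A : Type*} [MeasurableSpace Ω] (π : Measure Ω)
    (R1 : A → A → Prop) (R2 : A × A → A × A → Prop) (X Y : Ω → A) : Prop :=
  ∀ u, IsRepresentation R1 R2 u → ∫ ω, u (Y ω) ∂π ≤ ∫ ω, u (X ω) ∂π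

/-- The relation `R₁*` of `pref(ℝ^r)`: componentwise dominance. -/
def R1star (r : ℕ) (x y : Fin r → ℝ) : Prop := ∀ j, y j ≤ x j

/-- The relation `R₂*` of `pref(ℝ^r)` with the first `z` dimensions cardinal and the
remaining ones ordinal. -/
def R2star (r z : ℕ) (p q : (Fin r → ℝ) × (Fin r → ℝ)) : Prop :=
  R1star r p.1 p.2 ∧ R1star r q.1 q.2 ∧
  (∀ j : Fin r, (j : ℕ) < z → q.1 j - q.2 j ≤ p.1 j - p.2 j) ∧
  (∀ j : Fin r, z ≤ (j : ℕ) → p.2 j ≤ q.2 j ∧ q.2 j ≤ q.1 j ∧ q.1 j ≤ p.1 j)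


/-- Auxiliary piecewise coordinate transform: identity on cardinal dims, arctan on ordinal. -/
noncomputable def piece (z n : ℕ) (t : ℝ) : ℝ := if n < z then t else Real.arctan t

lemma piece_strictMono (z n : ℕ) : StrictMono (piece z n) := by
  unfold piece
  split_ifs
  · exact strictMono_id
  · exact Real.arctan_strictMono

lemma repAux (r z : ℕ) (j : Fin r) (hj : z ≤ (j : ℕ)) (u : ℝ → ℝ) (hm : Monotone u)
    (ε : ℝ) (hε : 0 < ε) :
    IsRepresentation (R1star r) (R2star r z)
      (fun x => u (x j) + ε * ∑ i : Fin r, piece z (i : ℕ) (x i)) := by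
  have hmono : ∀ (n : ℕ), Monotone (piece z n) := fun n => (piece_strictMono z n).monotone
  have hinj : ∀ (n : ℕ), Function.Injective (piece z n) :=
    fun n => (piece_strictMono z n).injective
  constructor
  · -- R1 part
    intro a b hab
    have hterm : ∀ i : Fin r, piece z (i : ℕ) (b i) ≤ piece z (i : ℕ) (a i) :=
      fun i => hmono _ (hab i)
    have hsum : ∑ i : Fin r, piece z (i : ℕ) (b i) ≤ ∑ i : Fin r, piece z (i : ℕ) (a i) :=
      Finset.sum_le_sum (fun i _ => hterm i)
    have huj : u (b j) ≤ u (a j) := hm (hab j)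
    have hmul : ε * ∑ i : Fin r, piece z (i : ℕ) (b i) ≤
        ε * ∑ i : Fin r, piece z (i : ℕ) (a i) := mul_le_mul_of_nonneg_left hsum hε.le
    refine ⟨by simpa using add_le_add huj hmul, ?_, ?_⟩
    · intro heq
      simp only at heq
      have hS : ε * ∑ i : Fin r, piece z (i : ℕ) (a i) =
          ε * ∑ i : Fin r, piece z (i : ℕ) (b i) := by linarith
      have hS' : ∑ i : Fin r, piece z (i : ℕ) (a i) =
          ∑ i : Fin r, piece z (i : ℕ) (b i) := mul_left_cancel₀ hε.ne' hS
      have hzero : ∑ i : Fin r, (piece z (i : ℕ) (a i) - piece z (i : ℕ) (b i)) = 0 := by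
        rw [Finset.sum_sub_distrib]; linarith
      have hall := (Finset.sum_eq_zero_iff_of_nonneg
        (fun i _ => by have := hterm i; linarith)).mp hzero
      intro i
      have : piece z (i : ℕ) (a i) = piece z (i : ℕ) (b i) := by
        have := hall i (Finset.mem_univ i); linarith
      exact le_of_eq (hinj _ this)
    · intro hba
      have : a = b := funext fun i => le_antisymm (hba i) (hab i)
      rw [this]
  · -- R2 part
    intro a b c d h2
    obtain ⟨hab, hcd, hcard, hord⟩ := h2
    have hterm : ∀ i : Fin r, piece z (i : ℕ) (c i) - piece z (i : ℕ) (d i) ≤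
        piece z (i : ℕ) (a i) - piece z (i : ℕ) (b i) := by
      intro i
      by_cases hi : (i : ℕ) < z
      · have := hcard i hi
        simp only [piece, if_pos hi]
        simp only at this
        linarith
      · obtain ⟨h1, h2', h3⟩ := hord i (le_of_not_gt hi)
        have e1 : piece z (i : ℕ) (c i) ≤ piece z (i : ℕ) (a i) := hmono _ h3
        have e2 : piece z (i : ℕ) (b i) ≤ piece z (i : ℕ) (d i) := hmono _ h1
        linarith
    have hsum : ∑ i : Fin r, piece z (i : ℕ) (c i) - ∑ i : Fin r, piece z (i : ℕ) (d i) ≤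
        ∑ i : Fin r, piece z (i : ℕ) (a i) - ∑ i : Fin r, piece z (i : ℕ) (b i) := by
      have := Finset.sum_le_sum (fun i (_ : i ∈ Finset.univ) => hterm i)
      rw [Finset.sum_sub_distrib, Finset.sum_sub_distrib] at this
      exact this
    obtain ⟨hj1, hj2, hj3⟩ := hord j hj
    have huj : u (c j) - u (d j) ≤ u (a j) - u (b j) := by
      have t1 := hm hj3; have t2 := hm hj1; simp only at t1 t2 ⊢; linarith
    constructor
    · simp only
      nlinarith [mul_le_mul_of_nonneg_left hsum hε.le]
    constructor
    · intro heq
      simp only at heq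
      have hmul : ε * (∑ i : Fin r, piece z (i : ℕ) (c i) - ∑ i : Fin r, piece z (i : ℕ) (d i)) ≤
          ε * (∑ i : Fin r, piece z (i : ℕ) (a i) - ∑ i : Fin r, piece z (i : ℕ) (b i)) :=
        mul_le_mul_of_nonneg_left hsum hε.le
      have hSeq : ε * (∑ i : Fin r, piece z (i : ℕ) (a i) - ∑ i : Fin r, piece z (i : ℕ) (b i)) =
          ε * (∑ i : Fin r, piece z (i : ℕ) (c i) - ∑ i : Fin r, piece z (i : ℕ) (d i)) := by
        nlinarith
      have hS : (∑ i : Fin r, piece z (i : ℕ) (a i) - ∑ i : Fin r, piece z (i : ℕ) (b i)) =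
          (∑ i : Fin r, piece z (i : ℕ) (c i) - ∑ i : Fin r, piece z (i : ℕ) (d i)) :=
        mul_left_cancel₀ hε.ne' hSeq
      have hzero : ∑ i : Fin r, ((piece z (i : ℕ) (a i) - piece z (i : ℕ) (b i)) -
          (piece z (i : ℕ) (c i) - piece z (i : ℕ) (d i))) = 0 := by
        rw [Finset.sum_sub_distrib, Finset.sum_sub_distrib, Finset.sum_sub_distrib]
        linarith
      have hall := (Finset.sum_eq_zero_iff_of_nonneg
        (fun i _ => by have := hterm i; linarith)).mp hzero
      have key : ∀ i : Fin r, (piece z (i : ℕ) (a i) - piece z (i : ℕ) (b i)) =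
          (piece z (i : ℕ) (c i) - piece z (i : ℕ) (d i)) := by
        intro i; have := hall i (Finset.mem_univ i); linarith
      refine ⟨hcd, hab, ?_, ?_⟩
      · intro i hi
        have := key i
        simp only [piece, if_pos hi] at this
        simp only
        linarith
      · intro i hi
        obtain ⟨h1, h2', h3⟩ := hord i hi
        have e1 : piece z (i : ℕ) (c i) ≤ piece z (i : ℕ) (a i) := hmono _ h3
        have e2 : piece z (i : ℕ) (b i) ≤ piece z (i : ℕ) (d i) := hmono _ h1
        have ki := key i
        have ea : piece z (i : ℕ) (a i) = piece z (i : ℕ) (c i) := by linarith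
        have eb : piece z (i : ℕ) (b i) = piece z (i : ℕ) (d i) := by linarith
        have ea' : a i = c i := hinj _ ea
        have eb' : b i = d i := hinj _ eb
        exact ⟨eb'.ge, hab i, ea'.le⟩
    · intro hrev
      obtain ⟨_, _, hcard', hord'⟩ := hrev
      have hja : a j = c j := le_antisymm (hord' j hj).2.2 hj3
      have hjb : b j = d j := le_antisymm hj1 (hord' j hj).1
      have keysum : ∀ i : Fin r, piece z (i : ℕ) (a i) - piece z (i : ℕ) (b i) =
          piece z (i : ℕ) (c i) - piece z (i : ℕ) (d i) := by
        intro i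
        by_cases hi : (i : ℕ) < z
        · have e1 := hcard i hi
          have e2 := hcard' i hi
          simp only at e1 e2
          simp only [piece, if_pos hi]
          linarith
        · obtain ⟨h1, h2', h3⟩ := hord i (le_of_not_gt hi)
          obtain ⟨k1, _, k3⟩ := hord' i (le_of_not_gt hi)
          have ea : a i = c i := le_antisymm k3 h3
          have eb : b i = d i := le_antisymm h1 k1
          rw [ea, eb]
      have hsums : ∑ i : Fin r, piece z (i : ℕ) (a i) - ∑ i : Fin r, piece z (i : ℕ) (b i) =
          ∑ i : Fin r, piece z (i : ℕ) (c i) - ∑ i : Fin r, piece z (i : ℕ) (d i) := by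
        rw [← Finset.sum_sub_distrib, ← Finset.sum_sub_distrib]
        exact Finset.sum_congr rfl (fun i _ => keysum i)
      simp only
      rw [hja, hjb]
      have m1 := mul_le_mul_of_nonneg_left hsums.le hε.le
      have m2 := mul_le_mul_of_nonneg_left hsums.ge hε.le
      linarith

/-- Proposition 7 iii) II.: GSD on `pref(ℝ^r)` implies first-order stochastic dominance
in every ordinal dimension `j > z`. -/
theorem stmt15 {Ω : Type*} [MeasurableSpace Ω] (π : Measure Ω) [IsProbabilityMeasure π]
    (r z : ℕ) (hz : z ≤ r) (X Y : Ω → (Fin r → ℝ))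
    (hX : memF π (R1star r) (R2star r z) X) (hY : memF π (R1star r) (R2star r z) Y)
    (hXi : ∀ j, Integrable (fun ω => X ω j) π) (hYi : ∀ j, Integrable (fun ω => Y ω j) π)
    (hGSD : GSDrel π (R1star r) (R2star r z) X Y) :
    ∀ j : Fin r, z ≤ (j : ℕ) →
      ∀ u : ℝ → ℝ, Measurable u → Monotone u → (∃ B, ∀ t, |u t| ≤ B) →
        ∫ ω, u (Y ω j) ∂π ≤ ∫ ω, u (X ω j) ∂π := by
  intro j hj u hu_meas hu_mono hu_bdd
  obtain ⟨B, hB⟩ := hu_bdd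
  -- abbreviation for the auxiliary sum
  set g : (Fin r → ℝ) → ℝ := fun x => ∑ i : Fin r, piece z (i : ℕ) (x i) with hg
  -- integrability facts
  have hint : ∀ (W : Ω → (Fin r → ℝ)), (∀ i, Integrable (fun ω => W ω i) π) →
      Integrable (fun ω => u (W ω j)) π ∧ Integrable (fun ω => g (W ω)) π := by
    intro W hWi
    constructor
    · refine Integrable.mono' (integrable_const B)
        ((hu_meas.comp_aemeasurable (hWi j).aemeasurable).aestronglyMeasurable) ?_
      refine Filter.Eventually.of_forall fun ω => ?_
      simpa [Real.norm_eq_abs] using hB (W ω j)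
    · have : ∀ i : Fin r, Integrable (fun ω => piece z (i : ℕ) (W ω i)) π := by
        intro i
        by_cases hi : (i : ℕ) < z
        · simpa [piece, if_pos hi] using hWi i
        · have hmeas : AEStronglyMeasurable (fun ω => Real.arctan (W ω i)) π :=
            (Real.continuous_arctan.measurable.comp_aemeasurable
              (hWi i).aemeasurable).aestronglyMeasurable
          have : Integrable (fun ω => Real.arctan (W ω i)) π := by
            refine Integrable.mono' (integrable_const (Real.pi / 2)) hmeas ?_
            refine Filter.Eventually.of_forall fun ω => ?_
            rw [Real.norm_eq_abs, abs_le]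
            exact ⟨(Real.neg_pi_div_two_lt_arctan _).le, (Real.arctan_lt_pi_div_two _).le⟩
          simpa [piece, if_neg hi] using this
      simpa [hg] using integrable_finset_sum Finset.univ (fun i _ => this i)
  obtain ⟨hXu, hXg⟩ := hint X hXi
  obtain ⟨hYu, hYg⟩ := hint Y hYi
  -- for every ε > 0 we get an inequality
  have key : ∀ ε : ℝ, 0 < ε →
      ∫ ω, u (Y ω j) ∂π - ∫ ω, u (X ω j) ∂π ≤
        ε * (∫ ω, g (X ω) ∂π - ∫ ω, g (Y ω) ∂π) := by
    intro ε hε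
    have hrep := repAux r z j hj u hu_mono ε hε
    have hineq := hGSD _ hrep
    have hXeq : ∫ ω, (u (X ω j) + ε * g (X ω)) ∂π =
        ∫ ω, u (X ω j) ∂π + ε * ∫ ω, g (X ω) ∂π := by
      rw [integral_add hXu (hXg.const_mul ε), MeasureTheory.integral_const_mul]
    have hYeq : ∫ ω, (u (Y ω j) + ε * g (Y ω)) ∂π =
        ∫ ω, u (Y ω j) ∂π + ε * ∫ ω, g (Y ω) ∂π := by
      rw [integral_add hYu (hYg.const_mul ε), MeasureTheory.integral_const_mul]
    simp only [hg] at hXeq hYeq hineq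
    rw [hXeq, hYeq] at hineq
    linarith
  -- let ε → 0
  set A := ∫ ω, u (Y ω j) ∂π - ∫ ω, u (X ω j) ∂π with hA
  set C := ∫ ω, g (X ω) ∂π - ∫ ω, g (Y ω) ∂π with hC
  have hA0 : A ≤ 0 := by
    by_contra h
    push_neg at h
    have hε : 0 < A / (2 * (|C| + 1)) := by positivity
    have := key _ hε
    have habs : C ≤ |C| := le_abs_self C
    have hpos : (0:ℝ) < |C| + 1 := by positivity
    have : A / (2 * (|C| + 1)) * C ≤ A / (2 * (|C| + 1)) * (|C| + 1) := by
      apply mul_le_mul_of_nonneg_left (by linarith) hε.le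
    have heq2 : A / (2 * (|C| + 1)) * (|C| + 1) = A / 2 := by
      field_simp
    nlinarith [key _ hε]
  linarith [hA0]

end GSD
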